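/- Let Γ be a vertex-transitive graph and let G ≤ Aut(Γ), v ∈ V(Γ), and O_v be as in the construction. Then the graph T(Γ,G;O_v) is isomorphic to a generalized truncation T(Γ,ρ;Υ) of the graph Γ by a graph Υ isomorphic to the orbital graph (Γ(v),O_v), for a suitable vertex-neighborhood labeling ρ of Γ. -/

import Mathlib

open SimpleGraph

variable {V : Type*}

/-- A permutation of the vertices is an automorphism of the graph. -/
def IsAut (Γ : SimpleGraph V) (π : Equiv.Perm V) : Prop :=
  ∀ a b : V, Γ.Adj (π a) (π b) ↔ Γ.Adj a b

/-- The generalized truncation `T(Γ,G;O_v)`: its vertices are the darts `(u,w)` of `Γ`;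
`(u,w)` is adjacent to `(w,u)` (blue edges), and `(u,w)` is adjacent to `(u,w')` whenever
there is a `g ∈ G` with `u^g = v` and `{w^g, w'^g} ∈ O` (red edges). -/
def truncT (Γ : SimpleGraph V) (G : Set (Equiv.Perm V)) (v : V) (O : Set (Sym2 V)) :
    SimpleGraph {p : V × V // Γ.Adj p.1 p.2} :=
  SimpleGraph.fromRel (fun x y =>
    (y.1.1 = x.1.2 ∧ y.1.2 = x.1.1) ∨
    (x.1.1 = y.1.1 ∧ ∃ g ∈ G, g x.1.1 = v ∧ s(g x.1.2, g y.1.2) ∈ O))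

/-- The orbital graph `(Γ(v), O)`: vertex set is the neighborhood of `v`, edge set `O`. -/
def orbitalGraph (Γ : SimpleGraph V) (v : V) (O : Set (Sym2 V)) :
    SimpleGraph (Γ.neighborSet v) :=
  SimpleGraph.fromRel (fun a b => s((a : V), (b : V)) ∈ O)

/-- The lift of an automorphism `g` of `Γ` to a permutation of the darts of `Γ`,
`(u,w) ↦ (u^g, w^g)`. -/
def liftPerm (Γ : SimpleGraph V) (g : Equiv.Perm V) (hg : IsAut Γ g) :
    Equiv.Perm {p : V × V // Γ.Adj p.1 p.2} :=
  Equiv.Perm.subtypePerm (Equiv.prodCongr g g) (fun x => hg x.1 x.2)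

/-- The generalized truncation `T(Γ,ρ;Υ)` of a graph `Γ` by a graph `Υ`,
with respect to a labeling `ρ` of the darts of `Γ` by vertices of `Υ`. -/
def trunc {V W : Type*} (Γ : SimpleGraph V) (Υ : SimpleGraph W)
    (ρ : ∀ u w : V, Γ.Adj u w → W) : SimpleGraph (V × W) where
  Adj x y := (x.1 = y.1 ∧ Υ.Adj x.2 y.2) ∨
    (∃ h : Γ.Adj x.1 y.1, x.2 = ρ x.1 y.1 h ∧ y.2 = ρ y.1 x.1 h.symm)
  symm := by
    constructor
    rintro ⟨u, i⟩ ⟨w, j⟩ (⟨h1, h2⟩ | ⟨h, h1, h2⟩)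
    · exact Or.inl ⟨h1.symm, h2.symm⟩
    · exact Or.inr ⟨h.symm, h2, h1⟩
  loopless := by
    constructor
    rintro ⟨u, i⟩ (⟨_, h⟩ | ⟨h, _⟩)
    · exact Υ.loopless.irrefl _ h
    · exact Γ.loopless.irrefl _ h

/-- `ρ` is a vertex-neighborhood labeling of `Γ`: for every vertex `u`, the restriction
of `ρ` to the darts emanating from `u` is a bijection onto the vertex set of `Υ`. -/
def IsVNLabeling {V W : Type*} (Γ : SimpleGraph V) (ρ : ∀ u w : V, Γ.Adj u w → W) : Prop :=
  ∀ u : V, ∀ i : W, ∃! w : V, ∃ h : Γ.Adj u w, ρ u w h = i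

lemma trunc_adj' {V W : Type*} (Γ : SimpleGraph V) (Υ : SimpleGraph W)
    (ρ : ∀ u w : V, Γ.Adj u w → W) (x y : V × W) :
    (trunc Γ Υ ρ).Adj x y ↔ (x.1 = y.1 ∧ Υ.Adj x.2 y.2) ∨
    (∃ h : Γ.Adj x.1 y.1, x.2 = ρ x.1 y.1 h ∧ y.2 = ρ y.1 x.1 h.symm) := Iff.rfl

/-- If `Γ` is vertex-transitive, with `G`, `v` and `O_v` as in the
construction, then `T(Γ,G;O_v)` is isomorphic to a generalized truncation of `Γ` by the
orbital graph `(Γ(v), O_v)`, for a suitable vertex-neighborhood labeling of `Γ`. -/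
theorem stmt9 {V : Type*} [Fintype V] [DecidableEq V]
    (Γ : SimpleGraph V) (G : Subgroup (Equiv.Perm V)) (v : V) (O : Set (Sym2 V))
    (hGaut : ∀ g ∈ G, IsAut Γ g)
    (hGtrans : ∀ a b : V, ∃ g ∈ G, g a = b)
    (hOsub : ∀ p ∈ O, ¬ p.IsDiag ∧ ∀ w ∈ p, Γ.Adj v w)
    (hOinv : ∀ p ∈ O, ∀ g ∈ G, g v = v → p.map ⇑g ∈ O) :
    ∃ ρ : (∀ u w : V, Γ.Adj u w → Γ.neighborSet v), IsVNLabeling Γ ρ ∧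
      Nonempty (truncT Γ (↑G) v O ≃g trunc Γ (orbitalGraph Γ v O) ρ) := by
  classical
  choose σ hσG hσv using fun u => hGtrans u v
  have hσaut : ∀ u, IsAut Γ (σ u) := fun u => hGaut _ (hσG u)
  have hadj : ∀ u w, Γ.Adj u w → Γ.Adj v (σ u w) := fun u w h => by
    have h2 : Γ.Adj (σ u u) (σ u w) := (hσaut u u w).2 h
    rwa [hσv u] at h2
  have hinj : ∀ u a b, σ u a = σ u b → a = b := fun u a b h => (σ u).injective h
  refine ⟨fun u w h => ⟨σ u w, hadj u w h⟩, ?_, ⟨?_⟩⟩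
  · intro u i
    refine ⟨(σ u)⁻¹ (i : V), ⟨?_, ?_⟩, ?_⟩
    · have h2 : Γ.Adj (σ u u) (σ u ((σ u)⁻¹ (i : V))) := by
        simp only [Equiv.Perm.inv_def, Equiv.apply_symm_apply, hσv u]
        exact i.2
      exact (hσaut u _ _).1 h2
    · exact Subtype.ext (by simp)
    · rintro w ⟨h, he⟩
      have h3 : σ u w = (i : V) := congrArg Subtype.val he
      simp [← h3]
  · -- the isomorphism
    have keyO : ∀ (u : V) (g : Equiv.Perm V), g ∈ G → g u = v →
        ∀ a b : V, s(g a, g b) ∈ O → s(σ u a, σ u b) ∈ O := by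
      intro u g hg hgu a b hab
      have hmem : σ u * g⁻¹ ∈ G := mul_mem (hσG u) (inv_mem hg)
      have hfix : (σ u * g⁻¹) v = v := by
        simp only [Equiv.Perm.mul_apply]
        rw [← hgu, Equiv.Perm.inv_def, Equiv.symm_apply_apply, hσv u]
        exact hgu.symm
      have h5 := hOinv _ hab _ hmem hfix
      simpa [Sym2.map_pair_eq, Equiv.Perm.mul_apply] using h5
    refine ⟨⟨fun x => (x.1.1, ⟨σ x.1.1 x.1.2, hadj _ _ x.2⟩),
      fun y => ⟨(y.1, (σ y.1)⁻¹ (y.2 : V)), ?_⟩, ?_, ?_⟩, ?_⟩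
    · have h2 : Γ.Adj (σ y.1 y.1) (σ y.1 ((σ y.1)⁻¹ (y.2 : V))) := by
        simp only [Equiv.Perm.inv_def, Equiv.apply_symm_apply, hσv y.1]
        exact y.2.2
      exact (hσaut y.1 _ _).1 h2
    · rintro ⟨⟨u, w⟩, h⟩
      simp
    · rintro ⟨u, i⟩
      simp
    · rintro ⟨⟨u, w⟩, hx⟩ ⟨⟨u', w'⟩, hy⟩
      simp only [Equiv.coe_fn_mk, trunc_adj', truncT, fromRel_adj]
      constructor
      · rintro (⟨h1, h2⟩ | ⟨h, h1, h2⟩)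
        · -- red edge from orbital adjacency
          subst h1
          rw [orbitalGraph, fromRel_adj] at h2
          obtain ⟨hne, hO⟩ := h2
          have hww' : w ≠ w' := by
            intro h; apply hne; exact Subtype.ext (by simp [h])
          have hOx : s(σ u w, σ u w') ∈ O := by
            rcases hO with h | h
            · exact h
            · rwa [Sym2.eq_swap] at h
          refine ⟨?_, Or.inl (Or.inr ⟨rfl, σ u, hσG u, hσv u, hOx⟩)⟩
          intro h
          exact hww' (congrArg (fun p => p.1.2) h)
        · -- blue edge
          have e1 : σ u w = σ u u' := congrArg Subtype.val h1
          have e2 : σ u' w' = σ u' u := congrArg Subtype.val h2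
          have hw : w = u' := hinj _ _ _ e1
          have hw' : w' = u := hinj _ _ _ e2
          refine ⟨?_, Or.inl (Or.inl ⟨hw.symm, hw'⟩)⟩
          intro hcon
          have h4 : u = u' := congrArg (fun p => p.1.1) hcon
          exact hx.ne (h4.trans hw.symm)
      · rintro ⟨hne, (⟨rfl, rfl⟩ | ⟨rfl, g, hg, hgu, hO⟩) | (⟨rfl, rfl⟩ | ⟨rfl, g, hg, hgu, hO⟩)⟩
        · -- blue r x y : u' = w, w' = u
          exact Or.inr ⟨hx, rfl, rfl⟩
        · -- red r x y : u = u'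
          have hww' : w ≠ w' := fun h => hne (by simp [h])
          refine Or.inl ⟨rfl, ?_⟩
          rw [orbitalGraph, fromRel_adj]
          exact ⟨fun h => hww' (hinj u _ _ (congrArg Subtype.val h)),
            Or.inl (keyO u g hg hgu w w' hO)⟩
        · -- blue r y x : u = w', w = u'
          exact Or.inr ⟨hx, rfl, rfl⟩
        · -- red r y x : u' = u
          have hww' : w ≠ w' := fun h => hne (by simp [h])
          refine Or.inl ⟨rfl, ?_⟩
          rw [orbitalGraph, fromRel_adj]
          have hOx : s(σ u' w, σ u' w') ∈ O := by
            have h6 := keyO u' g hg hgu w' w hO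
            rwa [Sym2.eq_swap] at h6
          exact ⟨fun h => hww' (hinj u' _ _ (congrArg Subtype.val h)), Or.inl hOx⟩
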